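/- Fix k ≥ 1 and let (a_n)_{n≥0}, (b_n)_{n≥0} be complex (or integer) sequences satisfying, for all n ≥ k, a_n = Σ_{i=1}^{k} a_{n−i} and b_n = Σ_{i=1}^{k} (a_{n−i} + b_{n−i}); set t_n = a_n + b_n. Define vectors c^{(k)} ∈ ℤ^{2k} by c^{(1)} = (2, −1) and, for k ≥ 2, c^{(k)}_i = c^{(k−1)}_i for 1 ≤ i ≤ k−1, c^{(k)}_k = c^{(k−1)}_k + 2, c^{(k)}_{k+ℓ} = c^{(k−1)}_{k+ℓ} − 2 for 1 ≤ ℓ ≤ k−2, c^{(k)}_{2k−1} = −2, and c^{(k)}_{2k} = −1 (treating c^{(k−1)} as padded with zeros in positions 2k−1 and 2k). Then each of the sequences (a_n), (b_n), (t_n) satisfies the order-2k recurrence z_n = Σ_{i=1}^{2k} c^{(k)}_i z_{n−i} for all n ≥ 2k. -/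
import Mathlib


open Finset

lemma cform_aux (c : ℕ → ℕ → ℤ)
    (hc11 : c 1 1 = 2) (hc12 : c 1 2 = -1)
    (hrec : ∀ m, 2 ≤ m →
      ((∀ i, 1 ≤ i → i ≤ m - 1 → c m i = c (m - 1) i) ∧
       c m m = c (m - 1) m + 2 ∧
       (∀ ℓ, 1 ≤ ℓ → ℓ ≤ m - 2 → c m (m + ℓ) = c (m - 1) (m + ℓ) - 2) ∧
       c m (2 * m - 1) = -2 ∧
       c m (2 * m) = -1)) :
    ∀ k, 1 ≤ k → (∀ i, 1 ≤ i → i ≤ k → c k i = 3 - (i : ℤ)) ∧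
      (∀ i, k + 1 ≤ i → i ≤ 2 * k → c k i = (i : ℤ) - 2 * k - 1) := by
  intro k hk
  induction k with
  | zero => omega
  | succ k ih =>
    rcases Nat.eq_or_lt_of_le hk with h1 | h1
    · have hk0 : k = 0 := by omega
      subst hk0
      constructor
      · intro i hi1 hi2
        have : i = 1 := by omega
        subst this; simp [hc11]
      · intro i hi1 hi2
        have : i = 2 := by omega
        subst this; simp [hc12]
    · have hk1 : 1 ≤ k := by omega
      obtain ⟨ihl, ihr⟩ := ih hk1
      have h2 : 2 ≤ k + 1 := by omega
      obtain ⟨h3, h4, h5, h6, h7⟩ := hrec (k+1) h2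
      simp only [Nat.add_sub_cancel] at h3 h4 h5
      constructor
      · intro i hi1 hi2
        rcases Nat.lt_or_ge i (k+1) with hi | hi
        · rw [h3 i hi1 (by omega), ihl i hi1 (by omega)]
        · have : i = k + 1 := by omega
          subst this
          rw [h4, ihr (k+1) (by omega) (by omega)]
          push_cast; ring
      · intro i hi1 hi2
        rcases Nat.lt_or_ge i (2*k+1) with hi | hi
        · have hℓ : i = (k+1) + (i - (k+1)) := by omega
          rw [hℓ, h5 (i - (k+1)) (by omega) (by omega), ← hℓ,
            ihr i (by omega) (by omega)]
          push_cast; ring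
        · rcases Nat.lt_or_ge i (2*(k+1)) with hi' | hi'
          · have : i = 2*(k+1) - 1 := by omega
            rw [this, h6]; push_cast; omega
          · have : i = 2*(k+1) := by omega
            rw [this, h7]; push_cast; ring

lemma dsum_aux (k : ℕ) (hk : 1 ≤ k) (g : ℕ → ℂ) :
    ∑ j ∈ Icc 1 k, ∑ i ∈ Icc 1 k, g (j + i)
      = ∑ s ∈ Icc 1 k, ((s : ℂ) - 1) * g s
        + ∑ s ∈ Icc (k+1) (2*k), ((2*k : ℂ) + 1 - s) * g s := by
  have step1 : ∀ j ∈ Icc 1 k,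
      ∑ i ∈ Icc 1 k, g (j + i)
        = ∑ s ∈ Icc 1 (2*k), if j + 1 ≤ s ∧ s ≤ j + k then g s else 0 := by
    intro j hj
    rw [mem_Icc] at hj
    rw [← Finset.sum_filter]
    have : Finset.filter (fun s => j + 1 ≤ s ∧ s ≤ j + k) (Icc 1 (2*k))
        = Icc (j+1) (j+k) := by
      ext s; simp only [mem_filter, mem_Icc]; omega
    rw [this]
    rw [show Icc (j+1) (j+k) = Finset.map (addLeftEmbedding j) (Icc 1 k) by
      rw [Finset.map_add_left_Icc]]
    rw [Finset.sum_map]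
    rfl
  rw [Finset.sum_congr rfl step1, Finset.sum_comm]
  have step2 : ∀ s ∈ Icc 1 (2*k),
      ∑ j ∈ Icc 1 k, (if j + 1 ≤ s ∧ s ≤ j + k then g s else 0)
        = ((min k (s-1) + 1 - max 1 (s-k) : ℕ) : ℂ) * g s := by
    intro s hs
    rw [mem_Icc] at hs
    have : ∀ j ∈ Icc 1 k, (if j + 1 ≤ s ∧ s ≤ j + k then g s else 0)
        = (if j ∈ Icc (s-k) (s-1) then g s else 0) := by
      intro j hj; rw [mem_Icc] at hj
      congr 1
      simp only [mem_Icc, eq_iff_iff]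
      omega
    rw [Finset.sum_congr rfl this, Finset.sum_ite_mem, Finset.sum_const]
    have hint : Icc 1 k ∩ Icc (s-k) (s-1) = Icc (max 1 (s-k)) (min k (s-1)) := by
      ext j; simp only [mem_inter, mem_Icc]; omega
    rw [hint, Nat.card_Icc, nsmul_eq_mul]
  rw [Finset.sum_congr rfl step2]
  have split : Icc 1 (2*k) = Icc 1 k ∪ Icc (k+1) (2*k) := by
    ext s; simp only [mem_Icc, mem_union]; omega
  have hdisj : Disjoint (Icc 1 k) (Icc (k+1) (2*k)) := by
    rw [Finset.disjoint_left]
    intro s hs hs'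
    rw [mem_Icc] at hs hs'; omega
  rw [split, Finset.sum_union hdisj]
  congr 1
  · apply Finset.sum_congr rfl
    intro s hs; rw [mem_Icc] at hs
    have h1 : min k (s-1) + 1 - max 1 (s-k) = s - 1 := by omega
    rw [h1]
    have : ((s - 1 : ℕ) : ℂ) = (s : ℂ) - 1 := by
      push_cast [Nat.cast_sub hs.1]; ring
    rw [this]
  · apply Finset.sum_congr rfl
    intro s hs; rw [mem_Icc] at hs
    have h1 : min k (s-1) + 1 - max 1 (s-k) = 2*k + 1 - s := by omega
    rw [h1]
    have : ((2*k + 1 - s : ℕ) : ℂ) = (2*k : ℂ) + 1 - s := by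
      push_cast [Nat.cast_sub (by omega : s ≤ 2*k+1)]; ring
    rw [this]

lemma keyid_aux (k : ℕ) (hk : 1 ≤ k) (C : ℕ → ℂ)
    (hC1 : ∀ i, 1 ≤ i → i ≤ k → C i = 3 - (i : ℂ))
    (hC2 : ∀ i, k + 1 ≤ i → i ≤ 2 * k → C i = (i : ℂ) - 2 * k - 1)
    (z : ℕ → ℂ) (n : ℕ) :
    ∑ i ∈ Icc 1 (2*k), C i * z (n - i)
      = ∑ j ∈ Icc 1 k, z (n - j)
        + ∑ j ∈ Icc 1 k, (z (n - j) - ∑ i ∈ Icc 1 k, z (n - j - i)) := by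
  have hA : ∑ j ∈ Icc 1 k, (z (n - j) - ∑ i ∈ Icc 1 k, z (n - j - i))
      = ∑ j ∈ Icc 1 k, z (n - j)
        - ∑ j ∈ Icc 1 k, ∑ i ∈ Icc 1 k, (fun s => z (n - s)) (j + i) := by
    rw [Finset.sum_sub_distrib]
    congr 1
    apply Finset.sum_congr rfl; intro j hj
    apply Finset.sum_congr rfl; intro i hi
    rw [Nat.sub_sub]
  rw [hA, dsum_aux k hk (fun s => z (n - s))]
  have split : Icc 1 (2*k) = Icc 1 k ∪ Icc (k+1) (2*k) := by
    ext s; simp only [mem_Icc, mem_union]; omega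
  have hdisj : Disjoint (Icc 1 k) (Icc (k+1) (2*k)) := by
    rw [Finset.disjoint_left]; intro s hs hs'
    rw [mem_Icc] at hs hs'; omega
  rw [split, Finset.sum_union hdisj]
  have e1 : ∑ i ∈ Icc 1 k, C i * z (n - i)
      = 2 * (∑ j ∈ Icc 1 k, z (n - j))
        - ∑ i ∈ Icc 1 k, ((i : ℂ) - 1) * z (n - i) := by
    rw [Finset.mul_sum, ← Finset.sum_sub_distrib]
    apply Finset.sum_congr rfl; intro i hi; rw [mem_Icc] at hi
    rw [hC1 i hi.1 hi.2]; ring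
  have e2 : ∑ i ∈ Icc (k+1) (2*k), C i * z (n - i)
      = - ∑ i ∈ Icc (k+1) (2*k), ((2*k : ℂ) + 1 - i) * z (n - i) := by
    rw [← Finset.sum_neg_distrib]
    apply Finset.sum_congr rfl; intro i hi; rw [mem_Icc] at hi
    rw [hC2 i hi.1 hi.2]; ring
  rw [e1, e2]
  ring

theorem stmt_7 (k : ℕ) (hk : 1 ≤ k) (a b t : ℕ → ℂ)
    (ha : ∀ n, k ≤ n → a n = ∑ i ∈ Icc 1 k, a (n - i))
    (hb : ∀ n, k ≤ n → b n = ∑ i ∈ Icc 1 k, (a (n - i) + b (n - i)))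
    (ht : ∀ n, t n = a n + b n)
    (c : ℕ → ℕ → ℤ)
    (hc11 : c 1 1 = 2)
    (hc12 : c 1 2 = -1)
    (hrec : ∀ m, 2 ≤ m →
      ((∀ i, 1 ≤ i → i ≤ m - 1 → c m i = c (m - 1) i) ∧
       c m m = c (m - 1) m + 2 ∧
       (∀ ℓ, 1 ≤ ℓ → ℓ ≤ m - 2 → c m (m + ℓ) = c (m - 1) (m + ℓ) - 2) ∧
       c m (2 * m - 1) = -2 ∧
       c m (2 * m) = -1)) :
    (∀ n, 2 * k ≤ n → a n = ∑ i ∈ Icc 1 (2 * k), (c k i : ℂ) * a (n - i)) ∧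
    (∀ n, 2 * k ≤ n → b n = ∑ i ∈ Icc 1 (2 * k), (c k i : ℂ) * b (n - i)) ∧
    (∀ n, 2 * k ≤ n → t n = ∑ i ∈ Icc 1 (2 * k), (c k i : ℂ) * t (n - i)) := by
  obtain ⟨hf1, hf2⟩ := cform_aux c hc11 hc12 hrec k hk
  have hC1 : ∀ i, 1 ≤ i → i ≤ k → ((c k i : ℤ) : ℂ) = 3 - (i : ℂ) := by
    intro i h1 h2; rw [hf1 i h1 h2]; push_cast; ring
  have hC2 : ∀ i, k + 1 ≤ i → i ≤ 2 * k → ((c k i : ℤ) : ℂ) = (i : ℂ) - 2 * k - 1 := by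
    intro i h1 h2; rw [hf2 i h1 h2]; push_cast; ring
  have keyA : ∀ n, 2 * k ≤ n →
      a n = ∑ i ∈ Icc 1 (2 * k), (c k i : ℂ) * a (n - i) := by
    intro n hn
    rw [keyid_aux k hk (fun i => ((c k i : ℤ) : ℂ)) hC1 hC2 a n]
    have hz : ∀ j ∈ Icc 1 k, a (n - j) - ∑ i ∈ Icc 1 k, a (n - j - i) = 0 := by
      intro j hj; rw [mem_Icc] at hj
      have := ha (n - j) (by omega)
      rw [sub_eq_zero, this]
    rw [Finset.sum_congr rfl hz, Finset.sum_const, smul_zero, add_zero]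
    exact ha n (by omega)
  have keyB : ∀ n, 2 * k ≤ n →
      b n = ∑ i ∈ Icc 1 (2 * k), (c k i : ℂ) * b (n - i) := by
    intro n hn
    rw [keyid_aux k hk (fun i => ((c k i : ℤ) : ℂ)) hC1 hC2 b n]
    have hz : ∀ j ∈ Icc 1 k, b (n - j) - ∑ i ∈ Icc 1 k, b (n - j - i) = a (n - j) := by
      intro j hj; rw [mem_Icc] at hj
      have hbj := hb (n - j) (by omega)
      have haj := ha (n - j) (by omega)
      rw [Finset.sum_add_distrib] at hbj
      rw [hbj, haj]
      ring
    rw [Finset.sum_congr rfl hz]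
    have : ∑ j ∈ Icc 1 k, b (n - j) + ∑ j ∈ Icc 1 k, a (n - j)
        = ∑ j ∈ Icc 1 k, (a (n - j) + b (n - j)) := by
      rw [Finset.sum_add_distrib]; ring
    rw [this]
    exact hb n (by omega)
  refine ⟨keyA, keyB, ?_⟩
  intro n hn
  rw [ht n, keyA n hn, keyB n hn, ← Finset.sum_add_distrib]
  apply Finset.sum_congr rfl; intro i hi
  rw [ht (n - i)]; ring
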